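/- The isomorphism classes of good G-gradings on M_m(k) are in bijection with the orbits of the action of S_m × G on G^m, where S_m acts by permuting coordinates and G acts diagonally by right translation. -/

import Mathlib

set_option linter.unusedSectionVars false
set_option maxHeartbeats 1000000

/-- A good `G`-grading on the matrix algebra `M_m(k)`: a direct sum
decomposition into subspaces `𝒜 g` with `𝒜 g * 𝒜 h ⊆ 𝒜 (g*h)` for which all
matrix units `e_{ij}` are homogeneous. -/
def IsGoodGrading {k : Type*} [Field k] {G : Type*} [Group G] [DecidableEq G] (m : ℕ)
    (𝒜 : G → Submodule k (Matrix (Fin m) (Fin m) k)) : Prop :=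
  DirectSum.IsInternal 𝒜 ∧ (∀ g h : G, 𝒜 g * 𝒜 h ≤ 𝒜 (g * h)) ∧
    ∀ i j : Fin m, ∃ σ : G, Matrix.single i j 1 ∈ 𝒜 σ

namespace GoodGradingAux

open Matrix

variable {k : Type*} [Field k] {G : Type*} [Group G] [DecidableEq G]

/-- Matrices supported on the fiber of `σ` under `(i,j) ↦ t i * (t j)⁻¹`. -/
def Sgr (m : ℕ) (t : Fin m → G) (σ : G) : Submodule k (Matrix (Fin m) (Fin m) k) where
  carrier := {x | ∀ i j, t i * (t j)⁻¹ ≠ σ → x i j = 0}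
  add_mem' := by intro x y hx hy i j h; simp [hx i j h, hy i j h]
  zero_mem' := by intro i j h; rfl
  smul_mem' := by intro c x hx i j h; simp [Matrix.smul_apply, hx i j h]

theorem stdBasisMatrix_mem_Sgr {m : ℕ} (t : Fin m → G) (i j : Fin m) (c : k) :
    Matrix.single i j c ∈ Sgr m t (t i * (t j)⁻¹) := by
  intro a b h
  apply Matrix.single_apply_of_ne
  rintro ⟨rfl, rfl⟩; exact h rfl

theorem stdBasisMatrix_one_ne_zero {m : ℕ} (i j : Fin m) :
    (Matrix.single i j (1:k)) ≠ 0 := by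
  intro h
  have := congrFun (congrFun h i) j
  simp at this

theorem exists_entry_ne_zero {m : ℕ} {x : Matrix (Fin m) (Fin m) k} (h : x ≠ 0) :
    ∃ a b, x a b ≠ 0 := by
  by_contra hc
  push_neg at hc
  exact h (by ext a b; exact hc a b)

/-- The complement submodule: matrices vanishing on the fiber of `σ`. -/
def SgrCompl (m : ℕ) (t : Fin m → G) (σ : G) : Submodule k (Matrix (Fin m) (Fin m) k) where
  carrier := {x | ∀ i j, t i * (t j)⁻¹ = σ → x i j = 0}
  add_mem' := by intro x y hx hy i j h; simp [hx i j h, hy i j h]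
  zero_mem' := by intro i j h; rfl
  smul_mem' := by intro c x hx i j h; simp [Matrix.smul_apply, hx i j h]

theorem isGoodGrading_Sgr {m : ℕ} (t : Fin m → G) :
    IsGoodGrading m (Sgr (k := k) m t) := by
  refine ⟨?_, ?_, fun i j => ⟨t i * (t j)⁻¹, stdBasisMatrix_mem_Sgr t i j 1⟩⟩
  · rw [DirectSum.isInternal_submodule_iff_iSupIndep_and_iSup_eq_top]
    constructor
    · intro σ
      have hle : ⨆ (τ) (_ : τ ≠ σ), Sgr (k := k) m t τ ≤ SgrCompl m t σ := by
        refine iSup_le fun τ => iSup_le fun hτ => ?_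
        intro x hx i j hij
        by_contra hne
        exact hτ (hij ▸ (by_contra fun h' => hne (hx i j h')).symm ▸ rfl)
      refine Submodule.disjoint_def.2 fun x hx hx' => ?_
      have hx2 := hle hx'
      ext i j
      by_cases h : t i * (t j)⁻¹ = σ
      · exact hx2 i j h
      · exact hx i j h
    · rw [eq_top_iff]
      intro x _
      rw [matrix_eq_sum_single x]
      refine Submodule.sum_mem _ fun i _ => Submodule.sum_mem _ fun j _ => ?_
      exact Submodule.mem_iSup_of_mem (t i * (t j)⁻¹) (stdBasisMatrix_mem_Sgr t i j _)
  · intro g h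
    rw [Submodule.mul_le]
    intro x hx y hy i j hij
    rw [Matrix.mul_apply]
    refine Finset.sum_eq_zero fun l _ => ?_
    by_cases h1 : t i * (t l)⁻¹ = g
    · by_cases h2 : t l * (t j)⁻¹ = h
      · exfalso; apply hij; rw [← h1, ← h2]; group
      · rw [hy l j h2, mul_zero]
    · rw [hx i l h1, zero_mul]

/-- Every good grading is (equal to) one induced by a tuple of degrees. -/
theorem grading_eq_Sgr {m : ℕ} {𝒜 : G → Submodule k (Matrix (Fin m) (Fin m) k)}
    (hA : IsGoodGrading m 𝒜) :
    ∃ t : Fin m → G, 𝒜 = Sgr m t := by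
  classical
  obtain ⟨hint, hmul, hhom⟩ := hA
  have hind := hint.submodule_iSupIndep
  have degree_unique : ∀ {x : Matrix (Fin m) (Fin m) k}, x ≠ 0 → ∀ {σ τ : G},
      x ∈ 𝒜 σ → x ∈ 𝒜 τ → σ = τ := by
    intro x hx σ τ h1 h2
    by_contra hne
    refine hx (Submodule.disjoint_def.1 (hind σ) x h1 ?_)
    exact Submodule.mem_iSup_of_mem τ (Submodule.mem_iSup_of_mem (Ne.symm hne) h2)
  set d : Fin m → Fin m → G := fun i j => Classical.choose (hhom i j) with hd_def
  have hd : ∀ i j, Matrix.single i j (1:k) ∈ 𝒜 (d i j) :=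
    fun i j => Classical.choose_spec (hhom i j)
  have hdmul : ∀ i j l, d i j * d j l = d i l := by
    intro i j l
    have h1 : Matrix.single i l (1:k) ∈ 𝒜 (d i j * d j l) := by
      have := hmul (d i j) (d j l) (Submodule.mul_mem_mul (hd i j) (hd j l))
      rwa [Matrix.single_mul_single_same, one_mul] at this
    exact degree_unique (stdBasisMatrix_one_ne_zero i l) h1 (hd i l)
  set t : Fin m → G := fun i => d i ⟨0, i.pos⟩ with ht_def
  have hdt : ∀ i j, d i j = t i * (t j)⁻¹ := by
    intro i j
    have h1 : d i j = d i ⟨0, i.pos⟩ * (d j ⟨0, i.pos⟩)⁻¹ := by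
      rw [← hdmul i j ⟨0, i.pos⟩]; group
    exact h1
  refine ⟨t, funext fun σ => le_antisymm ?_ ?_⟩
  · -- 𝒜 σ ≤ Sgr σ
    have hSle : ∀ τ, Sgr m t τ ≤ 𝒜 τ := by
      intro τ x hx
      rw [matrix_eq_sum_single x]
      refine Submodule.sum_mem _ fun i _ => Submodule.sum_mem _ fun j _ => ?_
      by_cases h : t i * (t j)⁻¹ = τ
      · have heq : Matrix.single i j (x i j)
            = x i j • Matrix.single i j (1:k) := by
          rw [smul_single, smul_eq_mul, mul_one]
        rw [heq]
        refine Submodule.smul_mem _ _ ?_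
        have := hd i j; rwa [hdt i j, h] at this
      · rw [hx i j h, Matrix.single_zero]
        exact Submodule.zero_mem _
    intro x hx
    set T : Finset G := Finset.image (fun p : Fin m × Fin m => t p.1 * (t p.2)⁻¹)
      Finset.univ with hT
    set y : G → Matrix (Fin m) (Fin m) k :=
      fun τ => Matrix.of fun i j => if t i * (t j)⁻¹ = τ then x i j else 0 with hy
    have hyS : ∀ τ, y τ ∈ Sgr m t τ := by
      intro τ i j h
      simp only [hy, Matrix.of_apply, if_neg h]
    have hsum : ∑ τ ∈ T, y τ = x := by
      ext i j
      rw [Matrix.sum_apply]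
      have hmem : t i * (t j)⁻¹ ∈ T := by
        rw [hT]; exact Finset.mem_image.2 ⟨(i, j), Finset.mem_univ _, rfl⟩
      calc ∑ τ ∈ T, y τ i j = ∑ τ ∈ T, if t i * (t j)⁻¹ = τ then x i j else 0 := rfl
        _ = x i j := Finset.sum_ite_eq T (t i * (t j)⁻¹) (fun _ => x i j) ▸ if_pos hmem
    by_cases hσT : σ ∈ T
    · have hz : x - y σ ∈ 𝒜 σ := Submodule.sub_mem _ hx (hSle σ (hyS σ))
      have hz2 : x - y σ = ∑ τ ∈ T.erase σ, y τ := by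
        rw [← hsum, ← Finset.add_sum_erase T y hσT]; abel
      have hz3 : x - y σ ∈ ⨆ (τ) (_ : τ ≠ σ), 𝒜 τ := by
        rw [hz2]
        refine Submodule.sum_mem _ fun τ hτ => ?_
        exact Submodule.mem_iSup_of_mem τ (Submodule.mem_iSup_of_mem
          (Finset.ne_of_mem_erase hτ) (hSle τ (hyS τ)))
      have h0 : x - y σ = 0 := Submodule.disjoint_def.1 (hind σ) _ hz hz3
      have hxy : x = y σ := by rwa [sub_eq_zero] at h0
      rw [hxy]; exact hyS σ
    · have hz3 : x ∈ ⨆ (τ) (_ : τ ≠ σ), 𝒜 τ := by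
        rw [← hsum]
        refine Submodule.sum_mem _ fun τ hτ => ?_
        refine Submodule.mem_iSup_of_mem τ (Submodule.mem_iSup_of_mem ?_ (hSle τ (hyS τ)))
        rintro rfl; exact hσT hτ
      have h0 : x = 0 := Submodule.disjoint_def.1 (hind σ) _ hx hz3
      rw [h0]; exact Submodule.zero_mem _
  · intro x hx
    rw [matrix_eq_sum_single x]
    refine Submodule.sum_mem _ fun i _ => Submodule.sum_mem _ fun j _ => ?_
    by_cases h : t i * (t j)⁻¹ = σ
    · have heq : Matrix.single i j (x i j)
          = x i j • Matrix.single i j (1:k) := by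
        rw [smul_single, smul_eq_mul, mul_one]
      rw [heq]
      refine Submodule.smul_mem _ _ ?_
      have := hd i j; rwa [hdt i j, h] at this
    · rw [hx i j h, Matrix.single_zero]
      exact Submodule.zero_mem _

/-- Orbit-equivalent tuples give graded-isomorphic gradings. -/
theorem iso_of_rel {m : ℕ} {t t' : Fin m → G}
    (h : ∃ (π : Equiv.Perm (Fin m)) (σ : G), ∀ i, t' i = t (π i) * σ) :
    ∃ e : Matrix (Fin m) (Fin m) k ≃ₐ[k] Matrix (Fin m) (Fin m) k,
      ∀ σ : G, Submodule.map e.toLinearMap (Sgr m t σ) = Sgr m t' σ := by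
  obtain ⟨π, σ0, hπ⟩ := h
  refine ⟨Matrix.reindexAlgEquiv k _ π.symm, fun σ => ?_⟩
  have key : ∀ i j, t' i * (t' j)⁻¹ = t (π i) * (t (π j))⁻¹ := by
    intro i j; rw [hπ i, hπ j]; group
  ext y
  simp only [Submodule.mem_map, AlgEquiv.toLinearMap_apply, reindexAlgEquiv_apply,
    reindex_apply, Equiv.symm_symm]
  constructor
  · rintro ⟨x, hx, rfl⟩ i j hne
    rw [Matrix.submatrix_apply]
    exact hx (π i) (π j) (by rwa [← key])
  · intro hy
    refine ⟨y.submatrix π.symm π.symm, ?_, ?_⟩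
    · intro i j hne
      rw [Matrix.submatrix_apply]
      refine hy (π.symm i) (π.symm j) ?_
      rwa [key, Equiv.apply_symm_apply, Equiv.apply_symm_apply]
    · ext i j
      simp

/-- Graded-isomorphic tuple gradings come from orbit-equivalent tuples. -/
theorem rel_of_iso {m : ℕ} {t t' : Fin m → G}
    (h : ∃ e : Matrix (Fin m) (Fin m) k ≃ₐ[k] Matrix (Fin m) (Fin m) k,
      ∀ σ : G, Submodule.map e.toLinearMap (Sgr m t σ) = Sgr m t' σ) :
    ∃ (π : Equiv.Perm (Fin m)) (σ : G), ∀ i, t' i = t (π i) * σ := by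
  classical
  obtain ⟨e, he⟩ := h
  rcases Nat.eq_zero_or_pos m with hm | hm
  · subst hm; exact ⟨Equiv.refl _, 1, fun i => i.elim0⟩
  set E : Fin m → Fin m → Matrix (Fin m) (Fin m) k :=
    fun i j => Matrix.single i j 1 with hE
  set f : Fin m → Matrix (Fin m) (Fin m) k := fun i => e (E i i) with hf
  have hmemE : ∀ i j, e (E i j) ∈ Sgr m t' (t i * (t j)⁻¹) := by
    intro i j
    rw [← he]
    exact Submodule.mem_map_of_mem (stdBasisMatrix_mem_Sgr t i j 1)
  have hmemf : ∀ i x y, f i x y ≠ 0 → t' x = t' y := by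
    intro i x y hxy
    have h1 := hmemE i i
    rw [mul_inv_cancel] at h1
    by_contra hne
    exact hxy (h1 x y fun hh => hne (mul_inv_eq_one.mp hh))
  have hEne : ∀ i j, (E i j : Matrix (Fin m) (Fin m) k) ≠ 0 :=
    fun i j => stdBasisMatrix_one_ne_zero i j
  have horth : ∀ i j, i ≠ j → f i * f j = 0 := by
    intro i j hij
    rw [hf]
    show e (E i i) * e (E j j) = 0
    rw [← _root_.map_mul]
    rw [show E i i * E j j = 0 from Matrix.single_mul_single_of_ne (c := (1:k)) i i j hij 1]
    exact map_zero _
  have hidem : ∀ i, f i * f i = f i := by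
    intro i
    show e (E i i) * e (E i i) = e (E i i)
    rw [← _root_.map_mul]
    congr 1
    rw [hE]
    simp [Matrix.single_mul_single_same]
  have hfne : ∀ i, f i ≠ 0 := by
    intro i h0
    exact hEne i i (e.injective (by rw [map_zero]; exact h0))
  have hex : ∀ i, ∃ p : Fin m × Fin m, f i p.1 p.2 ≠ 0 := by
    intro i
    obtain ⟨x, y, hxy⟩ := exists_entry_ne_zero (hfne i)
    exact ⟨(x, y), hxy⟩
  choose p hp using hex
  set a : Fin m → Fin m := fun i => (p i).1 with ha
  set b : Fin m → Fin m := fun i => (p i).2 with hb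
  set w : Fin m → (Fin m → k) := fun i x => f i x (b i) with hw
  have hwa : ∀ i, w i (a i) ≠ 0 := hp
  have hmv : ∀ i j, f i *ᵥ w j = if i = j then w i else 0 := by
    intro i j
    have h1 : f i *ᵥ w j = fun x => (f i * f j) x (b j) := by
      funext x
      simp [Matrix.mulVec, dotProduct, Matrix.mul_apply, hw]
    rw [h1]
    by_cases hij : i = j
    · subst hij
      rw [hidem, if_pos rfl]
    · rw [horth i j hij, if_neg hij]
      funext x
      simp
  have hmv2 : ∀ (g : Fin m → k) i, f i *ᵥ (∑ s, g s • w s) = g i • w i := by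
    intro g i
    have h1 : (f i).mulVecLin (∑ s, g s • w s) = ∑ s, g s • (f i).mulVecLin (w s) := by
      rw [map_sum]
      exact Finset.sum_congr rfl fun s _ => by rw [_root_.map_smul]
    simp only [Matrix.mulVecLin_apply] at h1
    rw [h1]
    simp only [hmv]
    rw [Finset.sum_congr rfl (fun s _ => by
      rw [show g s • (if i = s then w i else 0) = if i = s then g s • w i else 0 by
        split <;> simp])]
    simp
  have hlin : LinearIndependent k w := by
    rw [Fintype.linearIndependent_iff]
    intro g hg i
    have h0 : f i *ᵥ (∑ s, g s • w s) = 0 := by rw [hg, Matrix.mulVec_zero]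
    rw [hmv2] at h0
    rcases smul_eq_zero.mp h0 with h | h
    · exact h
    · exact absurd (congrFun h (a i)) (hwa i)
  haveI : Nonempty (Fin m) := ⟨⟨0, hm⟩⟩
  have hcard : Fintype.card (Fin m) = Module.finrank k (Fin m → k) := by
    simp [Module.finrank_fintype_fun_eq_card]
  set B := basisOfLinearIndependentOfCardEqFinrank hlin hcard with hB
  have hBc : ∀ s, B s = w s := fun s => by
    rw [hB, coe_basisOfLinearIndependentOfCardEqFinrank]
  have hcol : ∀ i c x, f i x c = B.repr (Pi.single c 1) i * w i x := by
    intro i c x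
    have h1 : (∑ s, B.repr (Pi.single c (1:k)) s • w s) = Pi.single c 1 := by
      conv_rhs => rw [← B.sum_repr (Pi.single c 1)]
      exact Finset.sum_congr rfl fun s _ => by rw [hBc]
    have h2 := hmv2 (fun s => B.repr (Pi.single c (1:k)) s) i
    rw [h1] at h2
    have h3 : f i *ᵥ Pi.single c (1:k) = fun x => f i x c := by
      rw [Matrix.mulVec_single]
      funext y
      simp [Matrix.col]
    rw [h3] at h2
    simpa using congrFun h2 x
  have hval : ∀ i x c, f i x c ≠ 0 → t' x = t' (a i) := by
    intro i x c hne
    have hwx : w i x ≠ 0 := by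
      intro h0
      exact hne (by rw [hcol i c x, h0, mul_zero])
    exact (hmemf i x (b i) hwx).trans (hmemf i (a i) (b i) (hwa i)).symm
  set v : Fin m → G := fun i => t' (a i) with hv
  have hvalc : ∀ i x c, f i x c ≠ 0 → t' c = v i := by
    intro i x c hne
    rw [← hmemf i x c hne]
    exact hval i x c hne
  have hkey : ∀ i j, v i * (v j)⁻¹ = t i * (t j)⁻¹ := by
    intro i j
    have hgmem := hmemE i j
    have hgne : e (E i j) ≠ 0 :=
      fun h0 => hEne i j (e.injective (by rw [map_zero]; exact h0))
    have hfgf : f i * (e (E i j) * f j) = e (E i j) := by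
      show e (E i i) * (e (E i j) * e (E j j)) = e (E i j)
      rw [← _root_.map_mul, ← _root_.map_mul]
      congr 1
      rw [hE]
      simp [Matrix.single_mul_single_same]
    obtain ⟨x, y, hxy⟩ := exists_entry_ne_zero hgne
    have hne2 : (f i * (e (E i j) * f j)) x y ≠ 0 := by rw [hfgf]; exact hxy
    rw [Matrix.mul_apply] at hne2
    obtain ⟨c, _, hc⟩ := Finset.exists_ne_zero_of_sum_ne_zero hne2
    have hc1 : f i x c ≠ 0 := fun h => hc (by rw [h, zero_mul])
    have hc2 : (e (E i j) * f j) c y ≠ 0 := fun h => hc (by rw [h, mul_zero])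
    rw [Matrix.mul_apply] at hc2
    obtain ⟨d, _, hd⟩ := Finset.exists_ne_zero_of_sum_ne_zero hc2
    have hd1 : e (E i j) c d ≠ 0 := fun h => hd (by rw [h, zero_mul])
    have hd2 : f j d y ≠ 0 := fun h => hd (by rw [h, mul_zero])
    have e1 : t' c = v i := hvalc i x c hc1
    have e2 : t' d = v j := hval j d y hd2
    have e3 : t' c * (t' d)⁻¹ = t i * (t j)⁻¹ := by
      by_contra hne
      exact hd1 (hgmem c d hne)
    rw [← e1, ← e2]
    exact e3
  have hsupp : ∀ i x, w i x ≠ 0 → t' x = v i := fun i x h => hval i x (b i) h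
  have hcards : ∀ γ : G,
      Fintype.card {i // v i = γ} ≤ Fintype.card {x // t' x = γ} := by
    intro γ
    have hli : LinearIndependent k
        (fun i : {i // v i = γ} => (fun x : {x // t' x = γ} => w i.1 x.1)) := by
      rw [Fintype.linearIndependent_iff]
      intro c hc i
      have hres : LinearIndependent k (fun i : {i // v i = γ} => w i.1) :=
        hlin.comp _ Subtype.val_injective
      rw [Fintype.linearIndependent_iff] at hres
      refine hres c ?_ i
      funext x
      rw [Finset.sum_apply]
      by_cases hx : t' x = γ
      · have := congrFun hc ⟨x, hx⟩
        simpa using this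
      · refine Finset.sum_eq_zero fun s _ => ?_
        have hws : w s.1 x = 0 := by
          by_contra hws
          exact hx ((hsupp s.1 x hws).trans s.2)
        simp [hws]
    calc Fintype.card {i // v i = γ}
        ≤ Module.finrank k ({x // t' x = γ} → k) := hli.fintype_card_le_finrank
      _ = Fintype.card {x // t' x = γ} := Module.finrank_fintype_fun_eq_card k
  have hcards_eq : ∀ γ : G,
      Fintype.card {i // v i = γ} = Fintype.card {x // t' x = γ} := by
    set T : Finset G := Finset.image v Finset.univ ∪ Finset.image t' Finset.univ with hT
    have h1 : (Finset.univ : Finset (Fin m)).card =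
        ∑ γ ∈ T, (Finset.univ.filter fun i => v i = γ).card :=
      Finset.card_eq_sum_card_fiberwise fun x _ =>
        Finset.mem_union_left _ (Finset.mem_image_of_mem v (Finset.mem_univ x))
    have h2 : (Finset.univ : Finset (Fin m)).card =
        ∑ γ ∈ T, (Finset.univ.filter fun x => t' x = γ).card :=
      Finset.card_eq_sum_card_fiberwise fun x _ =>
        Finset.mem_union_right _ (Finset.mem_image_of_mem t' (Finset.mem_univ x))
    have hle : ∀ γ ∈ T, (Finset.univ.filter fun i => v i = γ).card ≤
        (Finset.univ.filter fun x => t' x = γ).card := by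
      intro γ _
      have := hcards γ
      rwa [Fintype.card_subtype, Fintype.card_subtype] at this
    have heq := (Finset.sum_eq_sum_iff_of_le hle).mp (h1.symm.trans h2)
    intro γ
    by_cases hγ : γ ∈ T
    · have := heq γ hγ
      rwa [Fintype.card_subtype, Fintype.card_subtype]
    · have hv0 : IsEmpty {i // v i = γ} := ⟨fun x =>
        hγ (Finset.mem_union_left _ (Finset.mem_image.2 ⟨x.1, Finset.mem_univ _, x.2⟩))⟩
      have ht0 : IsEmpty {x // t' x = γ} := ⟨fun x =>
        hγ (Finset.mem_union_right _ (Finset.mem_image.2 ⟨x.1, Finset.mem_univ _, x.2⟩))⟩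
      rw [Fintype.card_eq_zero, Fintype.card_eq_zero]
  set F : ∀ γ : G, {i // v i = γ} ≃ {x // t' x = γ} :=
    fun γ => Fintype.equivOfCardEq (hcards_eq γ) with hF
  set pmap : Fin m → Fin m := fun i => (F (v i) ⟨i, rfl⟩).1 with hpmap
  have hpv : ∀ i, t' (pmap i) = v i := fun i => (F (v i) ⟨i, rfl⟩).2
  have hkeyF : ∀ (γ : G) (i : Fin m) (hi : v i = γ), pmap i = (F γ ⟨i, hi⟩).1 := by
    intro γ i hi
    subst hi
    rfl
  have hinj : Function.Injective pmap := by
    intro i j hij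
    have hvij : v i = v j := by rw [← hpv i, ← hpv j, hij]
    rw [hkeyF (v i) i rfl, hkeyF (v i) j hvij.symm] at hij
    have := (F (v i)).injective (Subtype.ext hij)
    exact congrArg Subtype.val this
  set π := Equiv.ofBijective pmap (Finite.injective_iff_bijective.mp hinj) with hπ
  set i0 : Fin m := ⟨0, hm⟩ with hi0
  refine ⟨π.symm, (t i0)⁻¹ * v i0, fun x => ?_⟩
  have h1 : ∀ i, t' (π i) = t i * ((t i0)⁻¹ * v i0) := by
    intro i
    have hπi : t' (π i) = v i := hpv i
    rw [hπi, ← mul_assoc, ← hkey i i0]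
    group
  have := h1 (π.symm x)
  rwa [Equiv.apply_symm_apply] at this

end GoodGradingAux

/-- The isomorphism classes of good `G`-gradings on `M_m(k)` are in
bijection with the orbits of the `S_m × G` action on `G^m`, where `S_m` permutes
coordinates and `G` acts diagonally by right translation. -/
theorem good_gradings_biject_orbits {k : Type*} [Field k] {G : Type*} [Group G]
    [DecidableEq G] (m : ℕ) :
    Nonempty
      ((Quot (fun (A B : {𝒜 : G → Submodule k (Matrix (Fin m) (Fin m) k) //
            IsGoodGrading m 𝒜}) =>
          ∃ e : Matrix (Fin m) (Fin m) k ≃ₐ[k] Matrix (Fin m) (Fin m) k,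
            ∀ σ : G, Submodule.map e.toLinearMap (A.1 σ) = B.1 σ))
        ≃
       (Quot (fun (t t' : Fin m → G) =>
          ∃ (π : Equiv.Perm (Fin m)) (σ : G), ∀ i, t' i = t (π i) * σ))) := by
  classical
  set Grading := {𝒜 : G → Submodule k (Matrix (Fin m) (Fin m) k) // IsGoodGrading m 𝒜}
    with hGrading
  set gr : Grading → Grading → Prop := fun A B =>
    ∃ e : Matrix (Fin m) (Fin m) k ≃ₐ[k] Matrix (Fin m) (Fin m) k,
      ∀ σ : G, Submodule.map e.toLinearMap (A.1 σ) = B.1 σ with hgr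
  set tr : (Fin m → G) → (Fin m → G) → Prop := fun t t' =>
    ∃ (π : Equiv.Perm (Fin m)) (σ : G), ∀ i, t' i = t (π i) * σ with htr
  have hgr_equiv : Equivalence gr := by
    constructor
    · intro A
      refine ⟨AlgEquiv.refl, fun σ => ?_⟩
      ext x
      simp [Submodule.mem_map]
    · rintro A B ⟨e, he⟩
      refine ⟨e.symm, fun σ => ?_⟩
      rw [← he σ, ← Submodule.map_comp]
      have : e.symm.toLinearMap.comp e.toLinearMap = LinearMap.id := by
        ext x; simp
      rw [this, Submodule.map_id]
    · rintro A B C ⟨e1, he1⟩ ⟨e2, he2⟩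
      refine ⟨e1.trans e2, fun σ => ?_⟩
      have : (e1.trans e2).toLinearMap = e2.toLinearMap.comp e1.toLinearMap := by
        ext x; simp
      rw [this, Submodule.map_comp, he1 σ, he2 σ]
  -- the map from tuples to gradings
  set mk1 : (Fin m → G) → Quot gr := fun t =>
    Quot.mk gr ⟨GoodGradingAux.Sgr m t, GoodGradingAux.isGoodGrading_Sgr t⟩ with hmk1
  have hmk1_resp : ∀ t t', tr t t' → mk1 t = mk1 t' := by
    intro t t' h
    exact Quot.sound (GoodGradingAux.iso_of_rel h)
  set Φ : Quot tr → Quot gr := Quot.lift mk1 hmk1_resp with hΦ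
  have hsurj : Function.Surjective Φ := by
    intro q
    induction q using Quot.ind with
    | _ A =>
      obtain ⟨t, ht⟩ := GoodGradingAux.grading_eq_Sgr A.2
      refine ⟨Quot.mk tr t, ?_⟩
      show mk1 t = Quot.mk gr A
      exact congrArg (Quot.mk gr) (Subtype.ext ht.symm)
  have hinj : Function.Injective Φ := by
    intro q1 q2 h
    induction q1 using Quot.ind with
    | _ t =>
      induction q2 using Quot.ind with
      | _ t' =>
        have h' : mk1 t = mk1 t' := h
        have h2 := Quot.eqvGen_exact h'
        rw [hgr_equiv.eqvGen_iff] at h2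
        obtain ⟨e, he⟩ := h2
        exact Quot.sound (GoodGradingAux.rel_of_iso ⟨e, he⟩)
  exact ⟨(Equiv.ofBijective Φ ⟨hinj, hsurj⟩).symm⟩
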